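/- Let K be a finite field, let s, t ∈ K be nonzero with t ≠ s⁻¹, and assume that the set {−1, s, t} generates the multiplicative group K^× . Let S = S_{s,t} be the bialexander switch on X = K, and let τ : K×K → K×K be a bijection, left and right invertible, such that (K, S, τ) is a singular pair. Then τ is a K-linear map, and setting a := τ¹(0,1) one has τ¹(0,y) = a·y and τ²(s·x, 0) = a·t·x for all x,y, and τ(x,y) = ( a·y + (1 − a/s)·x , (a·t/s)·x + (1 − a·t)·y ) for all x,y ∈ K. -/

import Mathlib

namespace Paper

/-- The flip map on `X × X`. -/
def flipMap (X : Type*) : X × X → X × X := fun p => (p.2, p.1)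

/-- `F × id` acting on triples. -/
def onFst {X : Type*} (F : X × X → X × X) : X × X × X → X × X × X :=
  fun p => ((F (p.1, p.2.1)).1, (F (p.1, p.2.1)).2, p.2.2)

/-- `id × F` acting on triples. -/
def onSnd {X : Type*} (F : X × X → X × X) : X × X × X → X × X × X :=
  fun p => (p.1, F p.2)

/-- `F` is left invertible: for all `x z` there is a unique `y` with `F¹(x,y) = z`. -/
def LeftInvertible {X : Type*} (F : X × X → X × X) : Prop :=
  ∀ x z : X, ∃! y : X, (F (x, y)).1 = z

/-- `F` is right invertible: for all `y t` there is a unique `x` with `F²(x,y) = t`. -/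
def RightInvertible {X : Type*} (F : X × X → X × X) : Prop :=
  ∀ y t : X, ∃! x : X, (F (x, y)).2 = t

/-- Set-theoretic solution of the Yang–Baxter equation. -/
def IsYB {X : Type*} (S : X × X → X × X) : Prop :=
  Function.Bijective S ∧
    onSnd S ∘ onFst S ∘ onSnd S = onFst S ∘ onSnd S ∘ onFst S

/-- Biquandle: a left and right invertible YB solution together with a bijection
`s : X → X` parametrizing the fixed points of `S`. -/
def IsBiquandle {X : Type*} (S : X × X → X × X) : Prop :=
  IsYB S ∧ LeftInvertible S ∧ RightInvertible S ∧
    ∃ s : X → X, Function.Bijective s ∧ ∀ x y : X, S (x, y) = (x, y) ↔ y = s x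

/-- `(X, S, τ)` is a singular pair. -/
def IsSingularPair {X : Type*} (S τ : X × X → X × X) : Prop :=
  IsBiquandle S ∧ Function.Bijective τ ∧ LeftInvertible τ ∧ RightInvertible τ ∧
    τ ∘ S = S ∘ τ ∧
    onFst S ∘ onSnd S ∘ onFst τ = onSnd τ ∘ onFst S ∘ onSnd S ∧
    onSnd S ∘ onFst S ∘ onSnd τ = onFst τ ∘ onSnd S ∘ onFst S

/-- The bialexander switch `S_{s,t}(x,y) = (s•y, t•x + (1 - s*t)•y)`. -/
def bialexander {R : Type*} [CommRing R] {X : Type*} [AddCommGroup X] [Module R X]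
    (s t : R) : X × X → X × X :=
  fun p => (s • p.2, t • p.1 + (1 - s * t) • p.2)

/-- over a finite field `K`, if `s,t ≠ 0`, `t ≠ s⁻¹`, and `{-1, s, t}`
generates `Kˣ`, then any `τ` giving a singular pair with the bialexander switch is
`K`-linear and is given by the explicit formula determined by `a := τ¹(0,1)`. -/
private theorem aux_formula {K : Type*} [Field K] [Fintype K]
    (s t : K) (hs : s ≠ 0) (ht : t ≠ 0) (hts : t ≠ s⁻¹)
    (hgen : Subgroup.closure {u : Kˣ | (u : K) = -1 ∨ (u : K) = s ∨ (u : K) = t} = ⊤)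
    (τ : K × K → K × K)
    (h1 : τ ∘ (bialexander (X := K) s t) = (bialexander (X := K) s t) ∘ τ)
    (h2 : onFst (bialexander (X := K) s t) ∘ onSnd (bialexander (X := K) s t) ∘ onFst τ
       = onSnd τ ∘ onFst (bialexander (X := K) s t) ∘ onSnd (bialexander (X := K) s t))
    (h3 : onSnd (bialexander (X := K) s t) ∘ onFst (bialexander (X := K) s t) ∘ onSnd τ
       = onFst τ ∘ onSnd (bialexander (X := K) s t) ∘ onFst (bialexander (X := K) s t)) :
    ∀ x y : K,
        τ (x, y) = ((τ (0, 1)).1 * y + (1 - (τ (0, 1)).1 / s) * x,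
          ((τ (0, 1)).1 * t / s) * x + (1 - (τ (0, 1)).1 * t) * y) := by
  have hst : 1 - s * t ≠ 0 := by
    intro h
    exact hts (by field_simp; linear_combination -h)
  have eA1 : ∀ x y : K, (τ (s*y, t*x + (1-s*t)*y)).1 = s * (τ (x,y)).2 := by
    intro x y
    have h := congrFun h1 (x, y)
    simp only [Function.comp_apply, bialexander, smul_eq_mul, Prod.ext_iff] at h
    exact h.1
  have eB1 : ∀ x y z : K, (τ (t*x + (1-s*t)*(s*z), t*y + (1-s*t)*z)).1
      = t * (τ (x,y)).1 + (1-s*t)*(s*z) := by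
    intro x y z
    have h := congrFun h2 (x, y, z)
    simp only [Function.comp_apply, onFst, onSnd, bialexander, smul_eq_mul, Prod.ext_iff] at h
    exact h.2.1.symm
  have eC1 : ∀ y z : K, (τ (s*y, s*z)).1 = s * (τ (y,z)).1 := by
    intro y z
    have h := congrFun h3 (0, y, z)
    simp only [Function.comp_apply, onFst, onSnd, bialexander, smul_eq_mul, Prod.ext_iff] at h
    exact h.1.symm
  have eG : ∀ y z : K, (τ (y,z)).2 = t*y + z - t * (τ (y,z)).1 := by
    intro y z
    have h := congrFun h3 (0, y, z)
    simp only [Function.comp_apply, onFst, onSnd, bialexander, smul_eq_mul, Prod.ext_iff] at h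
    have h' := h.2.2
    have hz : (1 - s*t) * ((τ (y,z)).2 - (t*y + z - t * (τ (y,z)).1)) = 0 := by
      linear_combination h'
    have h'' := (mul_eq_zero.mp hz).resolve_left hst
    linear_combination h''
  have eB1' : ∀ x y : K, (τ (t*x, t*y)).1 = t * (τ (x,y)).1 := by
    intro x y
    have h := eB1 x y 0
    simpa using h
  have estar : ∀ u v c : K, (τ (u + s*c, v + c)).1 = (τ (u,v)).1 + s*c := by
    intro u v c
    have h := eB1 (u/t) (v/t) (c/(1-s*t))
    have e1 : t*(u/t) + (1-s*t)*(s*(c/(1-s*t))) = u + s*c := by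
      rw [mul_div_cancel₀ _ ht, mul_left_comm, mul_div_cancel₀ _ hst]
    have e2 : t*(v/t) + (1-s*t)*(c/(1-s*t)) = v + c := by
      rw [mul_div_cancel₀ _ ht, mul_div_cancel₀ _ hst]
    have e3 : t*(u/t) = u := by field_simp
    have e4 : t*(v/t) = v := by field_simp
    rw [e1, e2] at h
    have h' := eB1' (u/t) (v/t)
    rw [e3, e4] at h'
    rw [h, ← h']
    have e5 : (1-s*t)*(s*(c/(1-s*t))) = s*c := by field_simp
    rw [e5]
  have edecomp : ∀ x y : K, (τ (x, y)).1 = (τ (x - s*y, 0)).1 + s*y := by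
    intro x y
    have h := estar (x - s*y) 0 y
    rw [show x - s*y + s*y = x by ring, zero_add] at h
    exact h
  have e00 : (τ ((0:K), (0:K))).1 = 0 := by
    by_contra h00
    have a1 := eB1' 0 0
    rw [mul_zero] at a1
    have a2 := eC1 0 0
    rw [mul_zero] at a2
    have ht1 : (t - 1) * (τ ((0:K),(0:K))).1 = 0 := by linear_combination -a1
    have hs1 : (s - 1) * (τ ((0:K),(0:K))).1 = 0 := by linear_combination -a2
    have ht1' := (mul_eq_zero.mp ht1).resolve_right h00
    have hs1' := (mul_eq_zero.mp hs1).resolve_right h00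
    apply hts
    have hteq : t = 1 := by linear_combination ht1'
    have hseq : s = 1 := by linear_combination hs1'
    rw [hteq, hseq, inv_one]
  have epsi_s : ∀ w : K, (τ (s*w, 0)).1 = s * (τ (w, 0)).1 := by
    intro w
    have h := eC1 w 0
    rw [mul_zero] at h
    exact h
  have epsi_t : ∀ w : K, (τ (t*w, 0)).1 = t * (τ (w, 0)).1 := by
    intro w
    have h := eB1' w 0
    rw [mul_zero] at h
    exact h
  have epsi_neg : ∀ w : K, (τ (-w, 0)).1 = - (τ (w, 0)).1 := by
    intro w
    have eA := eA1 (-w) 0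
    rw [mul_zero, show t*(-w) + (1-s*t)*0 = t*(-w) by ring] at eA
    have eGm := eG (-w) 0
    have eD := edecomp 0 (t*(-w))
    rw [show (0:K) - s*(t*(-w)) = s*(t*w) by ring] at eD
    have eS := eC1 (t*w) 0
    rw [mul_zero] at eS
    have eT := eB1' w 0
    rw [mul_zero] at eT
    have key : s*t*((τ (w,0)).1 + (τ (-w,0)).1) = 0 := by
      linear_combination eA - eD + s*eGm - eS - s*eT
    have h'' := (mul_eq_zero.mp key).resolve_left (mul_ne_zero hs ht)
    linear_combination h''
  -- subgroup argument
  have hunit : ∀ u : Kˣ, ∀ w : K, (τ ((u:K)*w, 0)).1 = (u:K) * (τ (w, 0)).1 := by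
    let M : Subgroup Kˣ :=
      { carrier := {u : Kˣ | ∀ w : K, (τ ((u:K)*w, 0)).1 = (u:K) * (τ (w, 0)).1}
        one_mem' := by intro w; simp
        mul_mem' := by
          intro a b ha hb w
          push_cast
          rw [mul_assoc, ha ((b:K)*w), hb w]
          ring
        inv_mem' := by
          intro u hu w
          have hune : (u:K) ≠ 0 := u.ne_zero
          have h1 := hu ((u:K)⁻¹ * w)
          rw [show (u:K) * ((u:K)⁻¹*w) = w by field_simp] at h1
          rw [Units.val_inv_eq_inv_val]
          rw [h1]
          field_simp }
    have hsub : {u : Kˣ | (u : K) = -1 ∨ (u : K) = s ∨ (u : K) = t} ⊆ ↑M := by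
      rintro u (h | h | h) <;> intro w <;> rw [h]
      · rw [show (-1:K)*w = -w by ring, epsi_neg w]; ring
      · exact epsi_s w
      · exact epsi_t w
    have htop : (⊤ : Subgroup Kˣ) ≤ M := by
      rw [← hgen]
      exact (Subgroup.closure_le M).mpr hsub
    intro u w
    exact htop (Subgroup.mem_top u) w
  have ehom : ∀ w : K, (τ (w, 0)).1 = (τ ((1:K), (0:K))).1 * w := by
    intro w
    rcases eq_or_ne w 0 with h | h
    · rw [h, e00, mul_zero]
    · have hu := hunit (Units.mk0 w h) 1
      rw [Units.val_mk0, mul_one] at hu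
      rw [hu]; ring
  have eF : ∀ x y : K, (τ (x, y)).1 = (τ ((1:K),(0:K))).1 * (x - s*y) + s*y := by
    intro x y
    rw [edecomp x y, ehom (x - s*y)]
  have ha : (τ ((0:K), (1:K))).1 = s - s * (τ ((1:K),(0:K))).1 := by
    rw [eF 0 1]; ring
  intro x y
  have c1 : (τ (x, y)).1 = (τ (0, 1)).1 * y + (1 - (τ (0, 1)).1 / s) * x := by
    rw [eF x y, ha]
    field_simp
    ring
  have c2 : (τ (x, y)).2 = ((τ (0, 1)).1 * t / s) * x + (1 - (τ (0, 1)).1 * t) * y := by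
    rw [eG x y, c1, ha]
    field_simp
    ring
  exact Prod.ext c1 c2

theorem singularPair_bialexander_linear {K : Type*} [Field K] [Fintype K]
    (s t : K) (hs : s ≠ 0) (ht : t ≠ 0) (hts : t ≠ s⁻¹)
    (hgen : Subgroup.closure {u : Kˣ | (u : K) = -1 ∨ (u : K) = s ∨ (u : K) = t} = ⊤)
    (τ : K × K → K × K)
    (hτ : IsSingularPair (bialexander (X := K) s t) τ) :
    IsLinearMap K τ ∧
      (∀ y : K, (τ (0, y)).1 = (τ (0, 1)).1 * y) ∧
      (∀ x : K, (τ (s * x, 0)).2 = (τ (0, 1)).1 * t * x) ∧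
      (∀ x y : K,
        τ (x, y) = ((τ (0, 1)).1 * y + (1 - (τ (0, 1)).1 / s) * x,
          ((τ (0, 1)).1 * t / s) * x + (1 - (τ (0, 1)).1 * t) * y)) := by
  obtain ⟨-, -, -, -, h1, h2, h3⟩ := hτ
  have hmain := aux_formula s t hs ht hts hgen τ h1 h2 h3
  refine ⟨?_, ?_, ?_, hmain⟩
  · have hfun : τ = fun p : K × K =>
        ((τ (0, 1)).1 * p.2 + (1 - (τ (0, 1)).1 / s) * p.1,
          ((τ (0, 1)).1 * t / s) * p.1 + (1 - (τ (0, 1)).1 * t) * p.2) := by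
      have a := (τ (0, 1)).1
      funext p
      exact hmain p.1 p.2
    constructor
    · intro p q
      rw [hfun]
      simp only [Prod.fst_add, Prod.snd_add, Prod.ext_iff, Prod.mk_add_mk]
      constructor <;> ring
    · intro c p
      rw [hfun]
      simp only [Prod.smul_fst, Prod.smul_snd, smul_eq_mul, Prod.ext_iff, Prod.smul_mk]
      constructor <;> ring
  · intro y
    rw [hmain 0 y]
    simp
  · intro x
    rw [hmain (s * x) 0]
    field_simp
    ring


end Paper
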